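/- arXiv:1504.07504 — 2 statements merged into one kernel-verified Lean document; each statement's English description precedes it below -/
import Mathlib

section
/- Edge contraction preserves reachability: if in a finite directed labeled graph an edge (ν, μ) is contracted by redirecting all edges incident to μ onto ν and deleting μ, then any node reachable from the start node before the contraction (other than μ itself) remains reachable after the contraction (with μ's reachability inherited by ν). -/
/-- Contraction of the edge `(ν, μ)` in a directed graph: remove the edge,
redirect every edge incident to `μ` onto `ν`, and delete `μ`; the
substitution `subst` sends `μ` to `ν` and fixes all other nodes.
Any node reachable from the start node before contraction remains reachable
after contraction (with `μ`'s reachability inherited by `ν`, and `ν`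
becoming the start node if `μ` was). -/
theorem contraction_preserves_reachability {V : Type*} [DecidableEq V]
    (E : Set (V × V)) (start ν μ : V) (hedge : (ν, μ) ∈ E)
    (subst : V → V) (hsubst : subst = fun z => if z = μ then ν else z)
    (E' : Set (V × V))
    (hE' : E' = (fun p : V × V => (subst p.1, subst p.2)) '' (E \ {(ν, μ)}))
    (start' : V) (hstart' : start' = subst start) :
    ∀ x : V, Relation.ReflTransGen (fun a b => (a, b) ∈ E) start x →
      Relation.ReflTransGen (fun a b => (a, b) ∈ E') start' (subst x) := by
  intro x hx
  subst hstart'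
  induction hx with
  | refl => exact Relation.ReflTransGen.refl
  | tail _ hbc ih =>
    rename_i b c _
    by_cases h : (b, c) = (ν, μ)
    · have hb : b = ν := (Prod.ext_iff.mp h).1
      have hc : c = μ := (Prod.ext_iff.mp h).2
      have : subst c = subst b := by rw [hb, hc]; simp [hsubst]
      rwa [this]
    · exact ih.tail (hE' ▸ ⟨(b, c), ⟨hbc, h⟩, rfl⟩)
end

section
/- The restriction of an LTS to a channel sub-alphabet is a trace abstraction: every trace of the original LTS, projected onto the actions of channels j..j+h, is a trace of the restricted LTS obtained by contracting all edges labeled with actions on other channels. -/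
/-- A labeled transition system whose actions carry channel identifiers
via `ch`. -/
structure LTS (S A : Type*) where
  tr : S → A → S → Prop
  init : S

/-- `Run L s w`: the finite action sequence `w` labels a path of `L` from `s`. -/
inductive Run {S A : Type*} (L : LTS S A) : S → List A → Prop
  | nil (s : S) : Run L s []
  | cons {s a s' w} : L.tr s a s' → Run L s' w → Run L s (a :: w)

/-- The finite-trace language of an LTS. -/
def traces {S A : Type*} (L : LTS S A) : Set (List A) := {w | Run L L.init w}

/-- States connected by a (possibly empty) sequence of edges labeled with
actions on channels outside `Γ` — the states identified by contracting all
such edges. -/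
def BadReach {S A : Type*} (ch : A → ℕ) (Γ : Set ℕ) (L : LTS S A)
    (s t : S) : Prop :=
  Relation.ReflTransGen (fun x y => ∃ a, L.tr x a y ∧ ch a ∉ Γ) s t

/-- The restriction `L_Γ` of `L` to the channels in `Γ`: edges labeled with
actions on other channels are contracted (their endpoints identified and
loops on such labels removed), so a `Γ`-labeled transition is available from
`s` whenever it is available from some state contraction-identified with `s`. -/
def restrictLTS {S A : Type*} (ch : A → ℕ) (Γ : Set ℕ) (L : LTS S A) :
    LTS S A where
  tr s a t := ch a ∈ Γ ∧ ∃ u, BadReach ch Γ L s u ∧ L.tr u a t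
  init := L.init

lemma run_restrict {S A : Type*} (ch : A → ℕ) (Γ : Set ℕ) [DecidablePred (· ∈ Γ)]
    (L : LTS S A) {s : S} {w : List A} (h : Run L s w) :
    ∀ s0, BadReach ch Γ L s0 s →
      Run (restrictLTS ch Γ L) s0 (w.filter (fun a => decide (ch a ∈ Γ))) := by
  induction h with
  | nil s => intro s0 _; simpa using Run.nil s0
  | @cons s a s' w htr hrun ih =>
    intro s0 hbr
    by_cases hc : ch a ∈ Γ
    · rw [List.filter_cons, if_pos (by simpa using hc)]
      exact Run.cons ⟨hc, s, hbr, htr⟩ (ih s' Relation.ReflTransGen.refl)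
    · rw [List.filter_cons, if_neg (by simpa using hc)]
      exact ih s0 (hbr.tail ⟨a, htr, hc⟩)

/-- Channel restriction is a trace abstraction: the projection (erasing
actions on channels outside `Γ = {j,…,j+h}`) of every trace of `L` is a
trace of the restricted LTS `L_Γ`. -/
theorem restriction_is_trace_abstraction {S A : Type*}
    (ch : A → ℕ) (Γ : Set ℕ) [DecidablePred (· ∈ Γ)] (L : LTS S A) :
    (fun w : List A => w.filter (fun a => decide (ch a ∈ Γ))) '' traces L ⊆
      traces (restrictLTS ch Γ L) := by
  rintro w ⟨v, hv, rfl⟩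
  exact run_restrict ch Γ L hv L.init Relation.ReflTransGen.refl
end
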